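/- Let k ∈ ℂ with k ≠ 1, let (S, C, D) be a Jacobi triple with modulus k, and let β ∈ ℂ with β² = 1 − k, β ≠ 0. On the open set U = { z ∈ ℂ : C(−iz/β) ≠ 0 }, the triple (z ↦ i·β·S(−iz/β)/C(−iz/β), z ↦ D(−iz/β)/C(−iz/β), z ↦ 1/C(−iz/β)) satisfies system (1) with modulus 1/(1 − k). (This is sn(i√(1−k) x | 1/(1−k)) = i√(1−k) sc(x|k), cn = dc(x|k), dn = nc(x|k).) -/

import Mathlib

/-- A Jacobi triple with modulus `k`: the model is `(sn(·|k), cn(·|k), dn(·|k))`. -/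
def IsJacobiTriple (k : ℂ) (S C D : ℂ → ℂ) : Prop :=
  ∀ z : ℂ, HasDerivAt S (C z * D z) z ∧ HasDerivAt C (-(S z * D z)) z ∧
    HasDerivAt D (-(k * S z * C z)) z ∧
    S z ^ 2 + C z ^ 2 = 1 ∧ D z ^ 2 + k * S z ^ 2 = 1

/-- A triple `(St, Ct, Dt)` satisfies system (1) with modulus `m` on `U`:
at every point of `U` the functions are differentiable with `St′ = Ct·Dt`,
and `St² + Ct² = 1` and `Dt² + m·St² = 1` hold on `U`. -/
def SatisfiesSystem1 (m : ℂ) (St Ct Dt : ℂ → ℂ) (U : Set ℂ) : Prop :=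
  ∀ z ∈ U, HasDerivAt St (Ct z * Dt z) z ∧
    DifferentiableAt ℂ Ct z ∧ DifferentiableAt ℂ Dt z ∧
    St z ^ 2 + Ct z ^ 2 = 1 ∧ Dt z ^ 2 + m * St z ^ 2 = 1

theorem stmt_7 (k : ℂ) (hk : k ≠ 1) (S C D : ℂ → ℂ) (hJ : IsJacobiTriple k S C D)
    (β : ℂ) (hβ : β ^ 2 = 1 - k) (hβ0 : β ≠ 0) :
    SatisfiesSystem1 (1 / (1 - k))
      (fun z => Complex.I * β * S (-Complex.I * z / β) / C (-Complex.I * z / β))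
      (fun z => D (-Complex.I * z / β) / C (-Complex.I * z / β))
      (fun z => 1 / C (-Complex.I * z / β))
      {z : ℂ | C (-Complex.I * z / β) ≠ 0} := by
  intro z hz
  simp only [Set.mem_setOf_eq] at hz
  simp only [neg_mul] at hz ⊢
  set w := -(Complex.I * z) / β with hw
  obtain ⟨hS, hC, hD, h1, h2⟩ := hJ w
  set s := S w with hs
  set c := C w with hc
  set d := D w with hd
  have hI2 : Complex.I ^ 2 = -1 := Complex.I_sq
  have hk1 : (1 : ℂ) - k ≠ 0 := sub_ne_zero.mpr (Ne.symm hk)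
  have hg : HasDerivAt (fun z : ℂ => -(Complex.I * z) / β) (-Complex.I / β) z := by
    simpa [neg_mul] using ((hasDerivAt_id z).const_mul (-Complex.I)).div_const β
  have hSc : HasDerivAt (fun z : ℂ => S (-(Complex.I * z) / β))
      (c * d * (-Complex.I / β)) z := hS.comp z hg
  have hCc : HasDerivAt (fun z : ℂ => C (-(Complex.I * z) / β))
      (-(s * d) * (-Complex.I / β)) z := hC.comp z hg
  have hDc : HasDerivAt (fun z : ℂ => D (-(Complex.I * z) / β))
      (-(k * s * c) * (-Complex.I / β)) z := hD.comp z hg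
  have hnum : HasDerivAt (fun z : ℂ => Complex.I * β * S (-(Complex.I * z) / β))
      (Complex.I * β * (c * d * (-Complex.I / β))) z := hSc.const_mul _
  refine ⟨?_, ?_, ?_, ?_, ?_⟩
  · have hdd := hnum.div hCc hz
    refine hdd.congr_deriv (Eq.symm ?_)
    rw [← hw, ← hs, ← hc]
    field_simp
    linear_combination d * Complex.I ^ 2 * h1 + d * hI2
  · exact hDc.differentiableAt.div hCc.differentiableAt hz
  · exact (differentiableAt_const 1).div hCc.differentiableAt hz
  · have e4 : (Complex.I * β * s) ^ 2 + d ^ 2 = c ^ 2 := by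
      linear_combination (-1 : ℂ) * h1 + h2 + (-(s ^ 2)) * hβ + (s ^ 2 * β ^ 2) * hI2
    field_simp
    linear_combination e4
  · have e5 : (1 - k) + Complex.I ^ 2 * β ^ 2 * s ^ 2 = c ^ 2 * (1 - k) := by
      linear_combination (-(1 - k)) * h1 + (-(s ^ 2)) * hβ + (s ^ 2 * β ^ 2) * hI2
    field_simp
    linear_combination e5
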